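/- Let v be a vector field in the Raviart–Thomas space RT_s, i.e. v_i = p_i + x_i·q for i = 1,…,d with p₁,…,p_d ∈ P_s and q ∈ P_s. If div v = Σᵢ ∂v_i/∂x_i = 0 as a polynomial identity, then every component v_i has total degree at most s, i.e. v ∈ [P_s]^d. (Lemma 3.6 of the paper: a divergence-free element of the local Raviart–Thomas space is a polynomial vector field of degree s.) -/

import Mathlib

open MvPolynomial

/-- Coefficient formula for partial derivatives of multivariate polynomials. -/
lemma coeff_pderiv_aux {d : ℕ} (i : Fin d) (m : Fin d →₀ ℕ) (f : MvPolynomial (Fin d) ℝ) :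
    coeff m (pderiv i f) = ((m i : ℝ) + 1) * coeff (m + Finsupp.single i 1) f := by
  induction f using MvPolynomial.induction_on' with
  | add f g hf hg => simp [map_add, coeff_add, hf, hg, mul_add]
  | monomial n a =>
    rw [pderiv_monomial, coeff_monomial, coeff_monomial]
    by_cases h0 : n i = 0
    · have h2 : n ≠ m + Finsupp.single i 1 := by
        intro h
        rw [h] at h0
        simp at h0
      simp [h0, h2]
    · by_cases h : n = m + Finsupp.single i 1
      · have hsub : n - Finsupp.single i 1 = m := by
          rw [h]; exact add_tsub_cancel_right _ _
        have hni : n i = m i + 1 := by rw [h]; simp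
        rw [if_pos hsub, if_pos h, hni]
        push_cast
        ring
      · have hsub : n - Finsupp.single i 1 ≠ m := by
          intro hc
          apply h
          ext j
          have h1 := congrArg (fun g : Fin d →₀ ℕ => g j) hc
          simp only [Finsupp.tsub_apply, Finsupp.single_apply, Finsupp.add_apply] at h1 ⊢
          by_cases hij : i = j
          · subst hij; simp at h1 ⊢; omega
          · simp [hij] at h1 ⊢; omega
        rw [if_neg hsub, if_neg h]; ring

/-- Lemma 3.6 of the paper: a divergence-free element of the local
Raviart–Thomas space `RT_s = [P_s]^d + x·P_s` is a polynomial vector field of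
total degree at most `s`. -/
theorem divergence_free_RT_is_polynomial
    (d s : ℕ) (hd : 1 ≤ d)
    (v p : Fin d → MvPolynomial (Fin d) ℝ) (q : MvPolynomial (Fin d) ℝ)
    (hp : ∀ i : Fin d, (p i).totalDegree ≤ s)
    (hq : q.totalDegree ≤ s)
    (hv : ∀ i : Fin d, v i = p i + X i * q)
    (hdiv : ∑ i : Fin d, pderiv i (v i) = 0) :
    ∀ i : Fin d, (v i).totalDegree ≤ s := by
  classical
  -- Step 1: every coefficient of `q` at a monomial of degree `s` vanishes.
  have key : ∀ m : Fin d →₀ ℕ, (∑ j ∈ m.support, m j) = s → coeff m q = 0 := by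
    intro m hm
    have hwt : ∀ i : Fin d, (∑ j ∈ (m + Finsupp.single i 1).support,
        (m + Finsupp.single i 1 : Fin d →₀ ℕ) j) = s + 1 := by
      intro i
      have : ((m + Finsupp.single i 1).sum fun _ e => e)
          = (m.sum fun _ e => e) + ((Finsupp.single i 1).sum fun _ e => e) :=
        Finsupp.sum_add_index' (fun _ => rfl) (fun _ _ _ => rfl)
      have hs1 : ((Finsupp.single i 1 : Fin d →₀ ℕ).sum fun _ e => e) = 1 :=
        Finsupp.sum_single_index rfl
      rw [hs1] at this
      simpa [Finsupp.sum, hm] using this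
    have hcoeff : ∀ i : Fin d, coeff m (pderiv i (v i)) = ((m i : ℝ) + 1) * coeff m q := by
      intro i
      rw [coeff_pderiv_aux, hv i, coeff_add]
      have h1 : coeff (m + Finsupp.single i 1) (p i) = 0 := by
        apply coeff_eq_zero_of_totalDegree_lt
        rw [hwt i]
        exact lt_of_le_of_lt (hp i) (Nat.lt_succ_self s)
      have h2 : coeff (m + Finsupp.single i 1) (X i * q) = coeff m q := by
        rw [add_comm m]
        exact coeff_X_mul m i q
      rw [h1, h2, zero_add]
    have hsum : (0 : ℝ) = ((s : ℝ) + d) * coeff m q := by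
      have h0 : coeff m (∑ i : Fin d, pderiv i (v i)) = 0 := by rw [hdiv]; simp
      rw [coeff_sum] at h0
      have h1 : ∑ i : Fin d, coeff m (pderiv i (v i))
          = (∑ i : Fin d, ((m i : ℝ) + 1)) * coeff m q := by
        rw [Finset.sum_mul]
        exact Finset.sum_congr rfl fun i _ => hcoeff i
      have h2 : (∑ i : Fin d, ((m i : ℝ) + 1)) = (s : ℝ) + d := by
        rw [Finset.sum_add_distrib]
        simp only [Finset.sum_const, Finset.card_univ, Fintype.card_fin, nsmul_eq_mul, mul_one]
        congr 1
        have : ∑ i : Fin d, m i = s := by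
          rw [← hm]
          exact (Finset.sum_subset (Finset.subset_univ _)
            (fun x _ hx => by simpa using Finsupp.notMem_support_iff.mp hx)).symm
        exact_mod_cast congrArg (Nat.cast : ℕ → ℝ) this
      rw [h1, h2] at h0
      exact h0.symm
    have hpos : ((s : ℝ) + d) ≠ 0 := by positivity
    have := hsum.symm
    exact (mul_eq_zero.mp this.symm.symm |>.resolve_left hpos)
  -- Step 2: conclude.
  rcases eq_or_ne q 0 with rfl | hq0
  · intro i
    rw [hv i, mul_zero, add_zero]
    exact hp i
  · have hlt : q.totalDegree < s := by
      obtain ⟨m, hm, hms⟩ := Finset.exists_mem_eq_sup q.support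
        (MvPolynomial.support_nonempty.mpr hq0) (fun m => m.sum fun _ e => e)
      have hdeg : q.totalDegree = ∑ j ∈ m.support, m j := hms
      have hle : (∑ j ∈ m.support, m j) ≤ s := hdeg ▸ hq
      have hne : (∑ j ∈ m.support, m j) ≠ s := by
        intro h
        exact MvPolynomial.mem_support_iff.mp hm (key m h)
      omega
    intro i
    rw [hv i]
    refine (totalDegree_add _ _).trans (max_le (hp i) ?_)
    calc (X i * q).totalDegree ≤ (X (R := ℝ) i).totalDegree + q.totalDegree :=
          totalDegree_mul _ _
      _ = 1 + q.totalDegree := by rw [totalDegree_X]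
      _ ≤ s := by omega
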